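/- Let $K_1 \supseteq K_2 \supseteq \cdots$ be an infinite decreasing sequence of nonempty constructible subsets of a complex algebraic variety $V$ (equivalently, of a Noetherian topological space whose closed irreducible subsets have generic behavior as in schemes of finite type over $\mathbb{C}$). Then $\bigcap_{i=1}^{\infty} K_i \neq \emptyset$. -/

import Mathlib

open AlgebraicGeometry TopologicalSpace

/-- Auxiliary purely topological statement: in a Noetherian quasi-sober space,
a decreasing sequence of nonempty constructible sets has nonempty intersection. -/
theorem key_topology {α : Type*} [TopologicalSpace α] [NoetherianSpace α] [QuasiSober α]
    (K : ℕ → Set α)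
    (hconstr : ∀ i, ∃ S : Finset (Set α),
      (∀ s ∈ S, IsLocallyClosed s) ∧ K i = ⋃ s ∈ S, s)
    (hne : ∀ i, (K i).Nonempty)
    (hmono : ∀ i, K (i + 1) ⊆ K i) :
    (⋂ i, K i).Nonempty := by
  have hanti : Antitone K := antitone_nat_of_succ_le hmono
  -- the closures stabilize
  set C : ℕ → Closeds α := fun i => ⟨closure (K i), isClosed_closure⟩ with hCdef
  obtain ⟨w, ⟨N, rfl⟩, hmin⟩ :=
    (wellFounded_lt (α := Closeds α)).has_min (Set.range C) ⟨C 0, 0, rfl⟩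
  have hstab : ∀ j, N ≤ j → closure (K j) = closure (K N) := by
    intro j hj
    have hle : C j ≤ C N := closure_mono (hanti hj)
    have hnlt : ¬ C j < C N := hmin (C j) ⟨j, rfl⟩
    have : C j = C N := hle.lt_or_eq.resolve_left hnlt
    exact congrArg SetLike.coe this
  -- decompose Z := closure (K N) into irreducible closed subsets
  have hZne : (closure (K N)).Nonempty := (hne N).mono subset_closure
  obtain ⟨S, hSfin, hScl, hSirr, hSU⟩ :=
    NoetherianSpace.exists_finite_set_isClosed_irreducible
      (isClosed_closure (s := K N))
  have hSne : S.Nonempty := by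
    rcases hZne with ⟨x, hx⟩
    rw [hSU] at hx
    rcases hx with ⟨t, htS, -⟩
    exact ⟨t, htS⟩
  -- pick T maximal among the members of S
  obtain ⟨T, hTS, hTmax0⟩ := Set.Finite.exists_maximalFor id S hSfin hSne
  have hTirr : IsIrreducible T := hSirr T hTS
  have hTcl : IsClosed T := hScl T hTS
  have hTZ : T ⊆ closure (K N) := hSU ▸ Set.subset_sUnion_of_mem hTS
  -- T is in fact maximal among all irreducible closed subsets of Z
  have hTmax : ∀ t, IsIrreducible t → IsClosed t → t ⊆ closure (K N) → T ⊆ t → t = T := by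
    intro t htirr htcl htZ hTt
    obtain ⟨ξ, hξ⟩ := QuasiSober.sober htirr htcl
    have hξZ : ξ ∈ closure (K N) := htZ hξ.mem
    rw [hSU] at hξZ
    rcases hξZ with ⟨s₀, hs₀S, hξs₀⟩
    have hts₀ : t ⊆ s₀ := by
      rw [← hξ.def]
      exact closure_minimal (Set.singleton_subset_iff.2 hξs₀) (hScl s₀ hs₀S)
    have : T = s₀ := subset_antisymm (hTt.trans hts₀) (hTmax0 hs₀S (hTt.trans hts₀))
    exact subset_antisymm (this ▸ hts₀) hTt
  -- generic point of T
  obtain ⟨η, hη⟩ := QuasiSober.sober hTirr hTcl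
  -- η belongs to every K j for j ≥ N
  have hkey : ∀ j, N ≤ j → η ∈ K j := by
    intro j hj
    obtain ⟨Sj, hlc, hKj⟩ := hconstr j
    have hclj : closure (K j) = ⋃ s ∈ Sj, closure s := by
      rw [hKj]; exact Finset.closure_biUnion Sj _
    have hηZ : η ∈ ⋃ s ∈ Sj, closure s := by
      rw [← hclj, hstab j hj]; exact hTZ hη.mem
    rcases Set.mem_iUnion₂.1 hηZ with ⟨s, hsSj, hηs⟩
    -- T ⊆ closure s ⊆ Z
    have hTs : T ⊆ closure s := by
      rw [← hη.def]
      exact closure_minimal (Set.singleton_subset_iff.2 hηs) isClosed_closure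
    have hsKj : s ⊆ K j := by rw [hKj]; exact fun x hx => Set.mem_biUnion hsSj hx
    have hsZ : closure s ⊆ closure (K N) := by
      rw [← hstab j hj]; exact closure_mono hsKj
    -- T meets s
    have hmeet : (T ∩ s).Nonempty := by
      by_contra hdisj
      rw [Set.not_nonempty_iff_eq_empty] at hdisj
      obtain ⟨S', hS'fin, hS'cl, hS'irr, hS'U⟩ :=
        NoetherianSpace.exists_finite_set_isClosed_irreducible
          (isClosed_closure (s := s))
      set W : Set α := ⋃ t ∈ S' \ {T}, t with hWdef
      have hWcl : IsClosed W :=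
        Set.Finite.isClosed_biUnion hS'fin.diff fun t ht => hS'cl t ht.1
      have hsW : s ⊆ W := by
        intro x hx
        have : x ∈ ⋃₀ S' := hS'U ▸ subset_closure hx
        rcases this with ⟨t, htS', hxt⟩
        refine Set.mem_biUnion ⟨htS', ?_⟩ hxt
        intro h
        exact Set.eq_empty_iff_forall_notMem.1 hdisj x ⟨h ▸ hxt, hx⟩
      have hclsW : closure s ⊆ W := closure_minimal hsW hWcl
      have hηW : η ∈ W := hclsW (hTs hη.mem)
      rcases Set.mem_iUnion₂.1 hηW with ⟨t, ⟨htS', htT⟩, hηt⟩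
      have hTt : T ⊆ t := by
        rw [← hη.def]
        exact closure_minimal (Set.singleton_subset_iff.2 hηt) (hS'cl t htS')
      have htZ : t ⊆ closure (K N) :=
        (Set.subset_sUnion_of_mem htS').trans (hS'U ▸ hsZ)
      exact htT (hTmax t (hS'irr t htS') (hS'cl t htS') htZ hTt)
    -- conclude η ∈ s
    obtain ⟨U, Zc, hU, hZc, hs_eq⟩ := hlc s hsSj
    have hηU : η ∈ U := by
      rcases hmeet with ⟨x, hxT, hxs⟩
      exact (hη.mem_open_set_iff hU).2 ⟨x, hxT, (hs_eq ▸ hxs).1⟩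
    have hηZc : η ∈ Zc := by
      have : closure s ⊆ Zc :=
        closure_minimal (by rw [hs_eq]; exact Set.inter_subset_right) hZc
      exact this hηs
    exact hsKj (hs_eq ▸ ⟨hηU, hηZc⟩)
  refine ⟨η, Set.mem_iInter.2 fun i => ?_⟩
  exact hanti (le_max_left i N) (hkey (max i N) (le_max_right i N))

/-- A decreasing sequence of nonempty constructible subsets (finite unions of
locally closed sets) of a complex algebraic variety (a scheme of finite type
over `ℂ`) has nonempty intersection. -/
theorem stmt1 (V : Scheme) (f : V ⟶ Spec (CommRingCat.of ℂ))
    [LocallyOfFiniteType f] [QuasiCompact f]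
    (K : ℕ → Set V)
    (hconstr : ∀ i, ∃ S : Finset (Set V),
      (∀ s ∈ S, IsLocallyClosed s) ∧ K i = ⋃ s ∈ S, s)
    (hne : ∀ i, (K i).Nonempty)
    (hmono : ∀ i, K (i + 1) ⊆ K i) :
    (⋂ i, K i).Nonempty := by
  haveI : IsLocallyNoetherian V := by
    constructor
    intro U
    have hQ := HasRingHomProperty.appLE (P := @LocallyOfFiniteType) f ‹LocallyOfFiniteType f›
      ⟨⊤, isAffineOpen_top _⟩ U (by exact le_top)
    haveI : IsNoetherianRing Γ(Spec (CommRingCat.of ℂ), ⊤) :=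
      IsLocallyNoetherian.component_noetherian ⟨⊤, isAffineOpen_top _⟩
    letI := (f.appLE ⊤ U.1 le_top).hom.toAlgebra
    haveI : Algebra.FiniteType Γ(Spec (CommRingCat.of ℂ), ⊤) Γ(V, U.1) := hQ
    exact Algebra.FiniteType.isNoetherianRing Γ(Spec (CommRingCat.of ℂ), ⊤) Γ(V, U.1)
  haveI : CompactSpace V := QuasiCompact.compactSpace_of_compactSpace f
  haveI : IsNoetherian V := ⟨⟩
  exact key_topology K hconstr hne hmono
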